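/- Let n ≥ 3 and l ≥ 1, and let C_n·P_l be the graph obtained by attaching a path P_l on l vertices to a cycle C_n by identifying one endpoint of the path with a vertex of the cycle. Then ν(C_n·P_l) = floor(n/3) + floor((l - ξ₃(n) + 1)/3), where ξ₃(n) = 1 if n ≡ 0 or 1 (mod 3) and ξ₃(n) = 0 if n ≡ 2 (mod 3). -/

import Mathlib

open SimpleGraph

/-- `M` is an induced matching of the simple graph `G`: every element of `M` is an
edge of `G`, and no edge of `G` joins (endpoints of) two distinct edges of `M`
(in particular the edges of `M` are pairwise disjoint). -/
def SimpleGraph.IsInducedMatching {V : Type*} (G : SimpleGraph V)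
    (M : Finset (Sym2 V)) : Prop :=
  (∀ e ∈ M, e ∈ G.edgeSet) ∧
    ∀ e ∈ M, ∀ f ∈ M, e ≠ f → ∀ u ∈ e, ∀ v ∈ f, ¬ G.Adj u v

/-- The induced matching number `ν(G)`: the maximum size of an induced matching. -/
noncomputable def SimpleGraph.inducedMatchingNumber {V : Type*} (G : SimpleGraph V) : ℕ :=
  sSup {k : ℕ | ∃ M : Finset (Sym2 V), G.IsInducedMatching M ∧ M.card = k}

/-- The graph obtained from `G` by deleting all vertices outside `A`
(keeping the ambient vertex type, deleted vertices become isolated). -/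
def SimpleGraph.restrictTo {V : Type*} (G : SimpleGraph V) (A : Set V) : SimpleGraph V where
  Adj a b := G.Adj a b ∧ a ∈ A ∧ b ∈ A
  symm := ⟨fun a b h => ⟨h.1.symm, h.2.2, h.2.1⟩⟩
  loopless := ⟨fun a h => G.irrefl h.1⟩

/-- `Γ_G(S)`: the set of vertices of `G` at distance exactly one from the set `S`. -/
def SimpleGraph.gammaSet {V : Type*} (G : SimpleGraph V) (S : Set V) : Set V :=
  {v | v ∉ S ∧ ∃ u ∈ S, G.Adj v u}

/-- Label (in `ℕ`) of the `k`-th vertex (0-indexed) of the bridge path: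
`z_1 = x_1 = 0` and `z_{k+1} = n + k - 1` for `k ≥ 1`. -/
def zVert (n : ℕ) (k : ℕ) : ℕ := if k = 0 then 0 else n + k - 1

/-- Label of the `j`-th vertex (0-indexed) of the second cycle `C_m`:
`y_1 = z_l` and `y_{j+1} = n + l - 2 + j` for `j ≥ 1`. -/
def yVert (n l : ℕ) (j : ℕ) : ℕ := if j = 0 then zVert n (l - 1) else n + l - 2 + j

/-- The graph `C_n · P_l` on vertex labels in `ℕ`: a cycle on `0, …, n-1`
together with a path on `l` vertices attached at the vertex `0`. -/
def cyclePathGraph (n l : ℕ) : SimpleGraph ℕ :=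
  SimpleGraph.fromRel (fun a b =>
    (∃ i < n, a = i ∧ b = (i + 1) % n) ∨
    (∃ k, k + 1 < l ∧ a = zVert n k ∧ b = zVert n (k + 1)))

/-- The dumbbell graph `C_n · P_l · C_m` on vertex labels in `ℕ`: cycles `C_n` and
`C_m` joined by a path on `l` vertices, the endpoints of the path being identified
with one vertex of each cycle. Its vertices are `0, …, n + m + l - 3`. -/
def dumbbell (n l m : ℕ) : SimpleGraph ℕ :=
  SimpleGraph.fromRel (fun a b =>
    (∃ i < n, a = i ∧ b = (i + 1) % n) ∨
    (∃ k, k + 1 < l ∧ a = zVert n k ∧ b = zVert n (k + 1)) ∨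
    (∃ j < m, a = yVert n l j ∧ b = yVert n l ((j + 1) % m)))

/-- `ξ₃(k) = 1` if `k ≡ 0, 1 (mod 3)`, and `ξ₃(k) = 0` if `k ≡ 2 (mod 3)`. -/
def xi3 (k : ℕ) : ℕ := if k % 3 = 2 then 0 else 1


section Aux

lemma adj_iff {n l a b : ℕ} : (cyclePathGraph n l).Adj a b ↔ a ≠ b ∧
    ((a < n ∧ b = (a+1) % n) ∨ (b < n ∧ a = (b+1) % n) ∨
     (∃ k, k + 1 < l ∧ a = zVert n k ∧ b = zVert n (k+1)) ∨
     (∃ k, k + 1 < l ∧ b = zVert n k ∧ a = zVert n (k+1))) := by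
  simp only [cyclePathGraph, fromRel_adj]
  constructor
  · rintro ⟨hne, h | h⟩
    · rcases h with ⟨i, hi, rfl, rfl⟩ | ⟨k, hk, rfl, rfl⟩
      · exact ⟨hne, Or.inl ⟨hi, rfl⟩⟩
      · exact ⟨hne, Or.inr (Or.inr (Or.inl ⟨k, hk, rfl, rfl⟩))⟩
    · rcases h with ⟨i, hi, rfl, rfl⟩ | ⟨k, hk, rfl, rfl⟩
      · exact ⟨hne, Or.inr (Or.inl ⟨hi, rfl⟩)⟩
      · exact ⟨hne, Or.inr (Or.inr (Or.inr ⟨k, hk, rfl, rfl⟩))⟩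
  · rintro ⟨hne, h | h | h | h⟩
    · exact ⟨hne, Or.inl (Or.inl ⟨a, h.1, rfl, h.2⟩)⟩
    · exact ⟨hne, Or.inr (Or.inl ⟨b, h.1, rfl, h.2⟩)⟩
    · exact ⟨hne, Or.inl (Or.inr h)⟩
    · exact ⟨hne, Or.inr (Or.inr h)⟩

lemma adj_cycle {n : ℕ} (hn : 2 ≤ n) (l : ℕ) {i : ℕ} (hi : i < n) :
    (cyclePathGraph n l).Adj i ((i+1) % n) := by
  rw [adj_iff]
  refine ⟨?_, Or.inl ⟨hi, rfl⟩⟩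
  intro h
  rcases Nat.lt_or_ge (i+1) n with h' | h'
  · rw [Nat.mod_eq_of_lt h'] at h; omega
  · have : i + 1 = n := by omega
    rw [this, Nat.mod_self] at h; omega

lemma adj_tail {n : ℕ} (hn : 1 ≤ n) {l k : ℕ} (hk : k + 1 < l) :
    (cyclePathGraph n l).Adj (zVert n k) (zVert n (k+1)) := by
  rw [adj_iff]
  refine ⟨?_, Or.inr (Or.inr (Or.inl ⟨k, hk, rfl, rfl⟩))⟩
  rcases k with _ | k <;> simp [zVert] <;> omega


-- edge classification
lemma edge_cases {n l : ℕ} {e : Sym2 ℕ} (he : e ∈ (cyclePathGraph n l).edgeSet) :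
    (∃ i < n, e = s(i, (i+1) % n)) ∨
    (∃ k, k + 1 < l ∧ e = s(zVert n k, zVert n (k+1))) := by
  induction e with
  | _ a b =>
    rw [mem_edgeSet, adj_iff] at he
    rcases he with ⟨hne, ⟨ha, rfl⟩ | ⟨hb, rfl⟩ | ⟨k, hk, rfl, rfl⟩ | ⟨k, hk, rfl, rfl⟩⟩
    · exact Or.inl ⟨a, ha, rfl⟩
    · exact Or.inl ⟨b, hb, Sym2.eq_swap⟩
    · exact Or.inr ⟨k, hk, rfl⟩
    · exact Or.inr ⟨k, hk, Sym2.eq_swap⟩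

-- vertex bound
lemma mem_edge_lt {n l : ℕ} (hn : 1 ≤ n) (hl : 1 ≤ l) {e : Sym2 ℕ}
    (he : e ∈ (cyclePathGraph n l).edgeSet) {u : ℕ} (hu : u ∈ e) : u < n + l - 1 := by
  rcases edge_cases he with ⟨i, hi, rfl⟩ | ⟨k, hk, rfl⟩
  · rw [Sym2.mem_iff] at hu
    have := Nat.mod_lt (i+1) (show 0 < n by omega)
    rcases hu with rfl | rfl <;> omega
  · rw [Sym2.mem_iff] at hu
    rcases hu with rfl | rfl <;> rcases k with _ | k <;> simp [zVert] <;> omega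

-- agreement
lemma adj_mono {n l l' a b : ℕ} (h : l ≤ l') (hadj : (cyclePathGraph n l).Adj a b) :
    (cyclePathGraph n l').Adj a b := by
  rw [adj_iff] at *
  refine ⟨hadj.1, ?_⟩
  rcases hadj.2 with h1 | h1 | ⟨k, hk, h1⟩ | ⟨k, hk, h1⟩
  · exact Or.inl h1
  · exact Or.inr (Or.inl h1)
  · exact Or.inr (Or.inr (Or.inl ⟨k, by omega, h1⟩))
  · exact Or.inr (Or.inr (Or.inr ⟨k, by omega, h1⟩))

lemma adj_restrict {n l l' a b : ℕ} (hl : 1 ≤ l) (h : l ≤ l')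
    (hadj : (cyclePathGraph n l').Adj a b) (ha : a < n + l - 1) (hb : b < n + l - 1) :
    (cyclePathGraph n l).Adj a b := by
  rw [adj_iff] at *
  refine ⟨hadj.1, ?_⟩
  rcases hadj.2 with h1 | h1 | ⟨k, hk, h1, h2⟩ | ⟨k, hk, h1, h2⟩
  · exact Or.inl h1
  · exact Or.inr (Or.inl h1)
  · refine Or.inr (Or.inr (Or.inl ⟨k, ?_, h1, h2⟩))
    subst h2; rcases k with _ | k <;> simp [zVert] at hb ⊢ <;> omega
  · refine Or.inr (Or.inr (Or.inr ⟨k, ?_, h1, h2⟩))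
    subst h2; rcases k with _ | k <;> simp [zVert] at ha ⊢ <;> omega

-- ν API
lemma im_subset {V : Type*} {G : SimpleGraph V} {M M' : Finset (Sym2 V)}
    (h : G.IsInducedMatching M) (hs : M' ⊆ M) : G.IsInducedMatching M' :=
  ⟨fun e he => h.1 e (hs he), fun e he f hf => h.2 e (hs he) f (hs hf)⟩

lemma im_empty {V : Type*} (G : SimpleGraph V) : G.IsInducedMatching ∅ := by
  constructor <;> simp

lemma setNonempty {V : Type*} (G : SimpleGraph V) :
    {k : ℕ | ∃ M : Finset (Sym2 V), G.IsInducedMatching M ∧ M.card = k}.Nonempty :=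
  ⟨0, ∅, im_empty G, rfl⟩

lemma card_le_of_im {n l : ℕ} (hn : 1 ≤ n) (hl : 1 ≤ l) {M : Finset (Sym2 ℕ)}
    (h : (cyclePathGraph n l).IsInducedMatching M) : M.card ≤ (n+l)*(n+l) := by
  have hsub : M ⊆ (Finset.range (n+l) ×ˢ Finset.range (n+l)).image (fun p => s(p.1, p.2)) := by
    intro e he
    have hE := h.1 e he
    induction e with
    | _ a b =>
      have ha : a < n + l - 1 := mem_edge_lt hn hl hE (by simp)
      have hb : b < n + l - 1 := mem_edge_lt hn hl hE (by simp)
      simp only [Finset.mem_image, Finset.mem_product, Finset.mem_range]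
      exact ⟨(a, b), ⟨by omega, by omega⟩, rfl⟩
  calc M.card ≤ _ := Finset.card_le_card hsub
    _ ≤ (Finset.range (n+l) ×ˢ Finset.range (n+l)).card := Finset.card_image_le
    _ = (n+l)*(n+l) := by simp [Finset.card_product]

lemma setBdd {n l : ℕ} (hn : 1 ≤ n) (hl : 1 ≤ l) :
    BddAbove {k : ℕ | ∃ M : Finset (Sym2 ℕ), (cyclePathGraph n l).IsInducedMatching M ∧ M.card = k} := by
  refine ⟨(n+l)*(n+l), ?_⟩
  rintro k ⟨M, hM, rfl⟩
  exact card_le_of_im hn hl hM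

lemma le_nu {n l : ℕ} (hn : 1 ≤ n) (hl : 1 ≤ l) {M : Finset (Sym2 ℕ)}
    (h : (cyclePathGraph n l).IsInducedMatching M) :
    M.card ≤ (cyclePathGraph n l).inducedMatchingNumber :=
  le_csSup (setBdd hn hl) ⟨M, h, rfl⟩

lemma nu_le {n l B : ℕ} (h : ∀ M : Finset (Sym2 ℕ),
    (cyclePathGraph n l).IsInducedMatching M → M.card ≤ B) :
    (cyclePathGraph n l).inducedMatchingNumber ≤ B :=
  csSup_le (setNonempty _) (by rintro k ⟨M, hM, rfl⟩; exact h M hM)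

lemma nu_mem {n l : ℕ} (hn : 1 ≤ n) (hl : 1 ≤ l) :
    ∃ M : Finset (Sym2 ℕ), (cyclePathGraph n l).IsInducedMatching M ∧
      M.card = (cyclePathGraph n l).inducedMatchingNumber :=
  Nat.sSup_mem (setNonempty _) (setBdd hn hl)


lemma lin_pack {a b : ℕ} (S : Finset ℕ) (hmem : ∀ i ∈ S, a ≤ i ∧ i ≤ b)
    (hgap : ∀ i ∈ S, i + 1 ∉ S ∧ i + 2 ∉ S) : 3 * S.card ≤ b + 3 - a := by
  classical
  have hdisj : ∀ i ∈ S, ∀ j ∈ S, i ≠ j →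
      Disjoint ({i, i+1, i+2} : Finset ℕ) ({j, j+1, j+2} : Finset ℕ) := by
    intro i hi j hj hij
    rw [Finset.disjoint_left]
    intro x hx hx'
    simp only [Finset.mem_insert, Finset.mem_singleton] at hx hx'
    have hgi := hgap i hi
    have hgj := hgap j hj
    have key : i = j ∨ j = i + 1 ∨ j = i + 2 ∨ i = j + 1 ∨ i = j + 2 := by omega
    rcases key with rfl | h | h | h | h
    · exact hij rfl
    · exact hgi.1 (h ▸ hj)
    · exact hgi.2 (h ▸ hj)
    · exact hgj.1 (h ▸ hi)
    · exact hgj.2 (h ▸ hi)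
  have hcard : (S.biUnion (fun i => ({i, i+1, i+2} : Finset ℕ))).card = 3 * S.card := by
    rw [Finset.card_biUnion hdisj]
    rw [Finset.sum_congr rfl (fun i _ => show ({i, i+1, i+2} : Finset ℕ).card = 3 by
      rw [Finset.card_insert_of_notMem (by simp),
          Finset.card_insert_of_notMem (by simp), Finset.card_singleton])]
    rw [Finset.sum_const, smul_eq_mul, mul_comm]
  have hsub : S.biUnion (fun i => ({i, i+1, i+2} : Finset ℕ)) ⊆ Finset.Icc a (b+2) := by
    intro x hx
    simp only [Finset.mem_biUnion, Finset.mem_insert, Finset.mem_singleton] at hx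
    obtain ⟨i, hi, h⟩ := hx
    have := hmem i hi
    rw [Finset.mem_Icc]
    omega
  have := Finset.card_le_card hsub
  rw [hcard, Nat.card_Icc] at this
  omega

lemma circ_pack {n : ℕ} (hn : 3 ≤ n) (S : Finset (ZMod n))
    (hgap : ∀ x ∈ S, x + 1 ∉ S ∧ x + 2 ∉ S) : 3 * S.card ≤ n := by
  classical
  haveI : NeZero n := ⟨by omega⟩
  have h1 : (1 : ZMod n) ≠ 0 := by
    have : ((1:ℕ) : ZMod n) ≠ ((0:ℕ) : ZMod n) := fun h => by
      have := (ZMod.natCast_eq_natCast_iff' 1 0 n).mp h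
      simp [Nat.mod_eq_of_lt (show 1 < n by omega)] at this
    simpa using this
  have h2 : (2 : ZMod n) ≠ 0 := by
    have : ((2:ℕ) : ZMod n) ≠ ((0:ℕ) : ZMod n) := fun h => by
      have := (ZMod.natCast_eq_natCast_iff' 2 0 n).mp h
      simp [Nat.mod_eq_of_lt (show 2 < n by omega)] at this
    simpa using this
  have h21 : (2 : ZMod n) ≠ 1 := by
    have : ((2:ℕ) : ZMod n) ≠ ((1:ℕ) : ZMod n) := fun h => by
      have := (ZMod.natCast_eq_natCast_iff' 2 1 n).mp h
      simp [Nat.mod_eq_of_lt (show 2 < n by omega), Nat.mod_eq_of_lt (show 1 < n by omega)] at this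
    simpa using this
  have hdisj : ∀ x ∈ S, ∀ y ∈ S, x ≠ y →
      Disjoint ({x, x+1, x+2} : Finset (ZMod n)) ({y, y+1, y+2} : Finset (ZMod n)) := by
    intro x hx y hy hxy
    rw [Finset.disjoint_left]
    intro w hw hw'
    simp only [Finset.mem_insert, Finset.mem_singleton] at hw hw'
    have hgx := hgap x hx
    have hgy := hgap y hy
    have key : x = y ∨ y = x + 1 ∨ y = x + 2 ∨ x = y + 1 ∨ x = y + 2 := by
      rcases hw with rfl | rfl | rfl <;> rcases hw' with h | h | h
      · exact Or.inl h
      · exact Or.inr (Or.inr (Or.inr (Or.inl h)))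
      · exact Or.inr (Or.inr (Or.inr (Or.inr h)))
      · exact Or.inr (Or.inl h.symm)
      · exact Or.inl (add_right_cancel h)
      · exact Or.inr (Or.inr (Or.inr (Or.inl (add_right_cancel
          (show x + 1 = (y + 1) + 1 by rw [h]; ring)))))
      · exact Or.inr (Or.inr (Or.inl h.symm))
      · exact Or.inr (Or.inl (add_right_cancel
          (show y + 1 = (x + 1) + 1 by rw [← h]; ring)))
      · exact Or.inl (add_right_cancel h)
    rcases key with rfl | h | h | h | h
    · exact hxy rfl
    · exact hgx.1 (h ▸ hy)
    · exact hgx.2 (h ▸ hy)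
    · exact hgy.1 (h ▸ hx)
    · exact hgy.2 (h ▸ hx)
  have hcard : (S.biUnion (fun x => ({x, x+1, x+2} : Finset (ZMod n)))).card = 3 * S.card := by
    rw [Finset.card_biUnion hdisj]
    rw [Finset.sum_congr rfl (fun x _ => show ({x, x+1, x+2} : Finset (ZMod n)).card = 3 by
      rw [Finset.card_insert_of_notMem (by
            simp only [Finset.mem_insert, Finset.mem_singleton]
            push_neg
            constructor
            · intro h; exact h1 (left_eq_add.mp h)
            · intro h; exact h2 (left_eq_add.mp h)),
          Finset.card_insert_of_notMem (by
            simp only [Finset.mem_singleton]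
            intro h; exact h21.symm (add_left_cancel h)), Finset.card_singleton])]
    rw [Finset.sum_const, smul_eq_mul, mul_comm]
  have := Finset.card_le_card (Finset.subset_univ
    (S.biUnion (fun x => ({x, x+1, x+2} : Finset (ZMod n)))))
  rw [hcard, Finset.card_univ, ZMod.card] at this
  exact this

lemma sym2_mem_left {α : Type*} {e : Sym2 α} {a b : α} (h : e = s(a,b)) : a ∈ e := by
  rw [h]; simp

lemma sym2_mem_right {α : Type*} {e : Sym2 α} {a b : α} (h : e = s(a,b)) : b ∈ e := by
  rw [h]; simp

lemma mod_small {i n : ℕ} (h : i < 2*n) : i % n = i ∨ (n ≤ i ∧ i % n = i - n) := by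
  rcases Nat.lt_or_ge i n with h' | h'
  · exact Or.inl (Nat.mod_eq_of_lt h')
  · right
    refine ⟨h', ?_⟩
    rcases Nat.eq_zero_or_pos n with rfl | hn
    · omega
    · rw [Nat.mod_eq_sub_mod h', Nat.mod_eq_of_lt (by omega)]

lemma cyc_pack {n l : ℕ} (hn : 3 ≤ n) {M : Finset (Sym2 ℕ)}
    (hIM : (cyclePathGraph n l).IsInducedMatching M)
    (hcyc : ∀ e ∈ M, ∃ i, i < n ∧ e = s(i, (i+1) % n)) : M.card ≤ n / 3 := by
  classical
  haveI : NeZero n := ⟨by omega⟩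
  choose! ι h1 h2 using hcyc
  have hinj : ∀ e ∈ M, ∀ f ∈ M, ((ι e : ℕ) : ZMod n) = ((ι f : ℕ) : ZMod n) → e = f := by
    intro e he f hf h
    have h' := (ZMod.natCast_eq_natCast_iff' _ _ _).mp h
    rw [Nat.mod_eq_of_lt (h1 e he), Nat.mod_eq_of_lt (h1 f hf)] at h'
    rw [h2 e he, h2 f hf, h']
  set S : Finset (ZMod n) := M.image (fun e => ((ι e : ℕ) : ZMod n)) with hS
  have hcard : S.card = M.card :=
    Finset.card_image_of_injOn (fun e he f hf h => hinj e he f hf h)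
  have hmodeq : ∀ e ∈ M, ∀ f ∈ M, ∀ c : ℕ,
      ((ι f : ℕ) : ZMod n) = ((ι e : ℕ) : ZMod n) + c → ι f = (ι e + c) % n := by
    intro e he f hf c h
    have : ((ι f : ℕ) : ZMod n) = ((ι e + c : ℕ) : ZMod n) := by push_cast; rw [h]
    have h' := (ZMod.natCast_eq_natCast_iff' _ _ _).mp this
    rw [Nat.mod_eq_of_lt (h1 f hf)] at h'
    exact h'
  have hgap : ∀ x ∈ S, x + 1 ∉ S ∧ x + 2 ∉ S := by
    intro x hx
    rw [hS, Finset.mem_image] at hx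
    obtain ⟨e, he, rfl⟩ := hx
    constructor
    · intro hx1
      rw [hS, Finset.mem_image] at hx1
      obtain ⟨f, hf, hfx⟩ := hx1
      have hf1 : ι f = (ι e + 1) % n := by
        apply hmodeq e he f hf 1; rw [hfx]; push_cast; ring
      have hne : e ≠ f := by
        intro h
        subst h
        have := mod_small (show ι e + 1 < 2*n by have := h1 e he; omega)
        have h1e := h1 e he
        omega
      refine hIM.2 e he f hf hne (ι e) (sym2_mem_left (h2 e he)) (ι f)
        (sym2_mem_left (h2 f hf)) ?_
      rw [hf1]; exact adj_cycle (by omega) l (h1 e he)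
    · intro hx1
      rw [hS, Finset.mem_image] at hx1
      obtain ⟨f, hf, hfx⟩ := hx1
      have hf1 : ι f = (ι e + 2) % n := by
        apply hmodeq e he f hf 2; rw [hfx]; push_cast; ring
      have hne : e ≠ f := by
        intro h
        subst h
        have := mod_small (show ι e + 2 < 2*n by have := h1 e he; omega)
        have h1e := h1 e he
        omega
      refine hIM.2 e he f hf hne ((ι e + 1) % n) (sym2_mem_right (h2 e he)) (ι f)
        (sym2_mem_left (h2 f hf)) ?_
      have : ι f = ((ι e + 1) % n + 1) % n := by rw [Nat.mod_add_mod]; exact hf1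
      rw [this]
      exact adj_cycle (by omega) l (Nat.mod_lt _ (by omega))
  have := circ_pack hn S hgap
  rw [hcard] at this
  omega

lemma path_pack {n l : ℕ} (hn : 3 ≤ n) {M : Finset (Sym2 ℕ)}
    (hIM : (cyclePathGraph n l).IsInducedMatching M) {a b : ℕ} (hb : b < n)
    (hcyc : ∀ e ∈ M, ∃ i, a ≤ i ∧ i < b ∧ e = s(i, i+1)) : 3 * M.card ≤ b + 2 - a := by
  classical
  rcases M.eq_empty_or_nonempty with rfl | ⟨e0, he0⟩
  · simp
  have hb1 : a < b := by
    obtain ⟨i, hi1, hi2, _⟩ := hcyc e0 he0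
    omega
  choose! ι h1 h2 h3 using hcyc
  have hinj : ∀ e ∈ M, ∀ f ∈ M, ι e = ι f → e = f := by
    intro e he f hf h
    rw [h3 e he, h3 f hf, h]
  set S : Finset ℕ := M.image ι with hS
  have hcard : S.card = M.card :=
    Finset.card_image_of_injOn (fun e he f hf h => hinj e he f hf h)
  have hgap : ∀ x ∈ S, x + 1 ∉ S ∧ x + 2 ∉ S := by
    intro x hx
    rw [hS, Finset.mem_image] at hx
    obtain ⟨e, he, rfl⟩ := hx
    constructor
    · intro hx1
      rw [hS, Finset.mem_image] at hx1
      obtain ⟨f, hf, hfx⟩ := hx1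
      have hne : e ≠ f := fun h => by rw [h] at hfx; omega
      refine hIM.2 e he f hf hne (ι e) (sym2_mem_left (h3 e he)) (ι f)
        (sym2_mem_left (h3 f hf)) ?_
      rw [hfx]
      have heq : ι e + 1 = (ι e + 1) % n := by
        rw [Nat.mod_eq_of_lt (by have := h2 f hf; omega)]
      rw [heq]
      exact adj_cycle (by omega) l (by have := h2 f hf; omega)
    · intro hx1
      rw [hS, Finset.mem_image] at hx1
      obtain ⟨f, hf, hfx⟩ := hx1
      have hne : e ≠ f := fun h => by rw [h] at hfx; omega
      refine hIM.2 e he f hf hne (ι e + 1) (sym2_mem_right (h3 e he)) (ι f)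
        (sym2_mem_left (h3 f hf)) ?_
      rw [hfx]
      have heq : ι e + 2 = (ι e + 1 + 1) % n := by
        rw [Nat.mod_eq_of_lt (by have := h2 f hf; omega)]
      rw [show ι e + 2 = ι e + 1 + 1 from rfl, heq]
      exact adj_cycle (by omega) l (by have := h2 f hf; omega)
  have hmem : ∀ i ∈ S, a ≤ i ∧ i ≤ b - 1 := by
    intro i hi
    rw [hS, Finset.mem_image] at hi
    obtain ⟨e, he, rfl⟩ := hi
    have := h1 e he
    have := h2 e he
    omega
  have := lin_pack S hmem hgap
  omega

lemma zVert_succ (n k : ℕ) : zVert n (k+1) = n + k := by simp [zVert]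

lemma zVert_zero (n : ℕ) : zVert n 0 = 0 := rfl

lemma adj_small {n l a b : ℕ} (hn : 3 ≤ n) (ha : a < n) (hb : b < n)
    (h : (cyclePathGraph n l).Adj a b) :
    b = a + 1 ∨ a = b + 1 ∨ (a = 0 ∧ b = n - 1) ∨ (b = 0 ∧ a = n - 1) := by
  rw [adj_iff] at h
  obtain ⟨hne, h⟩ := h
  rcases h with ⟨h1,h2⟩|⟨h1,h2⟩|⟨k,hk,h1,h2⟩|⟨k,hk,h1,h2⟩
  · rcases mod_small (show a+1 < 2*n by omega) with h'|h' <;> omega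
  · rcases mod_small (show b+1 < 2*n by omega) with h'|h' <;> omega
  · rw [zVert_succ] at h2; omega
  · rw [zVert_succ] at h2; omega

lemma adj_big {n l a b : ℕ} (hn : 1 ≤ n) (ha : n ≤ a) (h : (cyclePathGraph n l).Adj a b) :
    ∃ k, k + 1 < l ∧ ((a = zVert n k ∧ b = zVert n (k+1)) ∨ (b = zVert n k ∧ a = zVert n (k+1))) := by
  rw [adj_iff] at h
  obtain ⟨hne, h⟩ := h
  rcases h with ⟨h1,h2⟩|⟨h1,h2⟩|⟨k,hk,h1,h2⟩|⟨k,hk,h1,h2⟩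
  · omega
  · have := Nat.mod_lt (b+1) (show 0 < n by omega); omega
  · exact ⟨k, hk, Or.inl ⟨h1, h2⟩⟩
  · exact ⟨k, hk, Or.inr ⟨h1, h2⟩⟩

/-- the standard family of cycle edges `s(c+3t, c+3t+1)`, `t < N`. -/
def famA (c N : ℕ) : Finset (Sym2 ℕ) :=
  (Finset.range N).image (fun t => s(c + 3*t, c + 3*t + 1))

lemma famA_card {c N : ℕ} : (famA c N).card = N := by
  rw [famA, Finset.card_image_of_injOn, Finset.card_range]
  intro t _ s _ h
  rw [Sym2.eq_iff] at h
  omega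

lemma famA_mem {c N : ℕ} {e : Sym2 ℕ} (he : e ∈ famA c N) :
    ∃ t < N, e = s(c + 3*t, c + 3*t + 1) := by
  rw [famA, Finset.mem_image] at he
  obtain ⟨t, ht, rfl⟩ := he
  exact ⟨t, Finset.mem_range.mp ht, rfl⟩

lemma famA_im {n : ℕ} (l : ℕ) (hn : 3 ≤ n) (c N : ℕ) (h1 : c + 3*N ≤ n + 1)
    (h2 : 1 ≤ c ∨ c + 3*N ≤ n) :
    (cyclePathGraph n l).IsInducedMatching (famA c N) := by
  constructor
  · intro e he
    obtain ⟨t, ht, rfl⟩ := famA_mem he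
    rw [mem_edgeSet]
    have heq : c + 3*t + 1 = (c + 3*t + 1) % n := (Nat.mod_eq_of_lt (by omega)).symm
    rw [heq]
    exact adj_cycle (by omega) l (by omega)
  · intro e he f hf hne u hu v hv hadj
    obtain ⟨t, ht, rfl⟩ := famA_mem he
    obtain ⟨s, hs, rfl⟩ := famA_mem hf
    have hts : t ≠ s := fun h => hne (by rw [h])
    rw [Sym2.mem_iff] at hu hv
    have hu' : u < n := by omega
    have hv' : v < n := by omega
    have := adj_small hn hu' hv' hadj
    omega

lemma adj01 {n : ℕ} (hn : 3 ≤ n) (l : ℕ) : (cyclePathGraph n l).Adj 0 1 := by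
  have := adj_cycle (show 2 ≤ n by omega) l (show 0 < n by omega)
  rwa [Nat.mod_eq_of_lt (by omega)] at this

lemma adj0pred {n : ℕ} (hn : 3 ≤ n) (l : ℕ) : (cyclePathGraph n l).Adj 0 (n-1) := by
  have := adj_cycle (show 2 ≤ n by omega) l (show n-1 < n by omega)
  rw [show n-1+1 = n by omega, Nat.mod_self] at this
  exact this.symm

lemma adj0n {n l : ℕ} (hn : 1 ≤ n) (hl : 2 ≤ l) : (cyclePathGraph n l).Adj 0 n := by
  have := adj_tail (n := n) hn (show 0 + 1 < l by omega)
  rwa [zVert_zero, zVert_succ, Nat.add_zero] at this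

lemma adjnn1 {n l : ℕ} (hn : 1 ≤ n) (hl : 3 ≤ l) : (cyclePathGraph n l).Adj n (n+1) := by
  have := adj_tail (n := n) hn (show 1 + 1 < l by omega)
  rwa [zVert_succ, zVert_succ, Nat.add_zero] at this

lemma base1_lower {n l : ℕ} (hn : 3 ≤ n) (hl : 1 ≤ l) :
    n / 3 ≤ (cyclePathGraph n l).inducedMatchingNumber := by
  have h := famA_im l hn 0 (n/3) (by omega) (Or.inr (by omega))
  have := le_nu (by omega) hl h
  rwa [famA_card] at this

lemma base1 {n : ℕ} (hn : 3 ≤ n) :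
    (cyclePathGraph n 1).inducedMatchingNumber = n / 3 := by
  refine le_antisymm (nu_le fun M hIM => ?_) (base1_lower hn le_rfl)
  apply cyc_pack hn hIM
  intro e he
  rcases edge_cases (hIM.1 e he) with ⟨i, hi, rfl⟩ | ⟨k, hk, _⟩
  · exact ⟨i, hi, rfl⟩
  · omega

lemma mod_succ_eq {n i : ℕ} (hn : 1 ≤ n) (hi : i < n) (h0 : (i+1) % n ≠ 0) :
    (i+1) % n = i + 1 ∧ i + 1 < n := by
  rcases mod_small (show i + 1 < 2*n by omega) with h | ⟨hge, heq⟩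
  · have hb : (i+1) % n < n := Nat.mod_lt _ (show 0 < n by omega)
    rw [h] at hb
    exact ⟨h, hb⟩
  · exfalso
    apply h0
    rw [heq]
    omega

lemma tail0_constraint {n l : ℕ} (hn : 3 ≤ n) (hl : 2 ≤ l) {M : Finset (Sym2 ℕ)}
    (hIM : (cyclePathGraph n l).IsInducedMatching M) (hT : s(0, n) ∈ M)
    {e : Sym2 ℕ} (he : e ∈ M) (hne : e ≠ s(0, n)) {i : ℕ} (hi : i < n)
    (hei : e = s(i, (i+1) % n)) : ∃ j, 2 ≤ j ∧ j < n - 2 ∧ e = s(j, j+1) := by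
  have key := hIM.2 _ hT e he (Ne.symm hne)
  have F1 : ∀ v ∈ e, v ≠ 1 ∧ v ≠ n - 1 ∧ v ≠ 0 := by
    intro v hv
    have h0v := key 0 (by simp) v hv
    have hnv := key n (by simp) v hv
    refine ⟨?_, ?_, ?_⟩
    · rintro rfl; exact h0v (adj01 hn l)
    · rintro rfl; exact h0v (adj0pred hn l)
    · rintro rfl; exact hnv (adj0n (by omega) hl).symm
  have Hi := F1 i (sym2_mem_left hei)
  have Hj := F1 _ (sym2_mem_right hei)
  have hj := mod_small (show i + 1 < 2*n by omega)
  have hmod : (i+1) % n = i + 1 := by omega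
  rw [hmod] at Hj
  exact ⟨i, by omega, by omega, by rw [hei, hmod]⟩

lemma no_tail_cyc {n l : ℕ} (hn : 3 ≤ n) {M : Finset (Sym2 ℕ)}
    (hIM : (cyclePathGraph n l).IsInducedMatching M)
    (hnt : ∀ e ∈ M, ∀ k, k + 1 < l → e ≠ s(zVert n k, zVert n (k+1))) :
    M.card ≤ n / 3 := by
  apply cyc_pack hn hIM
  intro e he
  rcases edge_cases (hIM.1 e he) with ⟨i, hi, hei⟩ | ⟨k, hk, hek⟩
  · exact ⟨i, hi, hei⟩
  · exact absurd hek (hnt e he k hk)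

lemma base2 {n : ℕ} (hn : 3 ≤ n) :
    (cyclePathGraph n 2).inducedMatchingNumber
      = n / 3 + (if n % 3 = 2 then 1 else 0) := by
  refine le_antisymm (nu_le fun M hIM => ?_) ?_
  · by_cases hT : s(0, n) ∈ M
    · set M' := M.erase s(0, n) with hM'
      have hIM' : (cyclePathGraph n 2).IsInducedMatching M' :=
        im_subset hIM (Finset.erase_subset _ _)
      have hcyc : ∀ e ∈ M', ∃ i, 2 ≤ i ∧ i < n - 2 ∧ e = s(i, i+1) := by
        intro e he'
        have he := Finset.mem_of_mem_erase he'
        have hnee := Finset.ne_of_mem_erase he'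
        rcases edge_cases (hIM.1 e he) with ⟨i, hi, hei⟩ | ⟨k, hk, hek⟩
        · exact tail0_constraint hn le_rfl hIM hT he hnee hi hei
        · exfalso
          have hk0 : k = 0 := by omega
          subst hk0
          rw [zVert_zero, zVert_succ, Nat.add_zero] at hek
          exact hnee hek
      have hpp := path_pack hn hIM' (show n - 2 < n by omega) hcyc
      have hcard : M'.card = M.card - 1 := Finset.card_erase_of_mem hT
      have hpos : 1 ≤ M.card := Finset.card_pos.mpr ⟨_, hT⟩
      by_cases h3 : n % 3 = 2 <;> simp only [h3, if_true, if_false] <;> omega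
    · have hle := no_tail_cyc hn hIM (fun e he k hk => by
        have hk0 : k = 0 := by omega
        subst hk0
        rw [zVert_zero, zVert_succ, Nat.add_zero]
        exact fun h => hT (h ▸ he))
      by_cases h3 : n % 3 = 2 <;> simp only [h3, if_true, if_false] <;> omega
  · by_cases h3 : n % 3 = 2
    · simp only [h3, if_true]
      set N := (n - 2) / 3 with hN
      have h3N : 3 * N = n - 2 := by omega
      have hA := famA_im 2 hn 2 N (by omega) (Or.inl (by omega))
      have hrange : ∀ e ∈ famA 2 N, ∀ v ∈ e, 2 ≤ v ∧ v ≤ n - 2 := by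
        intro e he v hv
        obtain ⟨t, ht, rfl⟩ := famA_mem he
        rw [Sym2.mem_iff] at hv
        omega
      have hNA : ∀ v, 2 ≤ v → v ≤ n - 2 →
          ¬ (cyclePathGraph n 2).Adj 0 v ∧ ¬ (cyclePathGraph n 2).Adj n v := by
        intro v h2v hvn
        constructor
        · intro hadj
          have := adj_small hn (by omega) (by omega) hadj
          omega
        · intro hadj
          obtain ⟨k, hk, hc⟩ := adj_big (by omega) le_rfl hadj
          have hk0 : k = 0 := by omega
          subst hk0
          rw [zVert_zero, zVert_succ, Nat.add_zero] at hc
          omega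
      have hnotmem : s(0, n) ∉ famA 2 N := by
        intro h
        obtain ⟨t, ht, h⟩ := famA_mem h
        rw [Sym2.eq_iff] at h
        omega
      have hIMfull : (cyclePathGraph n 2).IsInducedMatching (insert s(0, n) (famA 2 N)) := by
        constructor
        · intro e he
          rcases Finset.mem_insert.mp he with rfl | heA
          · exact ((cyclePathGraph n 2).mem_edgeSet).mpr (adj0n (by omega) le_rfl)
          · exact hA.1 e heA
        · intro e he f hf hef u hu v hv hadj
          rcases Finset.mem_insert.mp he with rfl | heA <;>
            rcases Finset.mem_insert.mp hf with rfl | hfA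
          · exact hef rfl
          · rw [Sym2.mem_iff] at hu
            have hvr := hrange f hfA v hv
            rcases hu with rfl | rfl
            · exact (hNA v hvr.1 hvr.2).1 hadj
            · exact (hNA v hvr.1 hvr.2).2 hadj
          · rw [Sym2.mem_iff] at hv
            have hur := hrange e heA u hu
            rcases hv with rfl | rfl
            · exact (hNA u hur.1 hur.2).1 hadj.symm
            · exact (hNA u hur.1 hur.2).2 hadj.symm
          · exact hA.2 e heA f hfA hef u hu v hv hadj
      have hle := le_nu (show 1 ≤ n by omega) (show (1:ℕ) ≤ 2 by omega) hIMfull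
      rw [Finset.card_insert_of_notMem hnotmem, famA_card] at hle
      omega
    · simp only [h3, if_false]
      have := base1_lower hn (show 1 ≤ 2 by omega)
      omega

lemma base3 {n : ℕ} (hn : 3 ≤ n) :
    (cyclePathGraph n 3).inducedMatchingNumber = n / 3 + 1 := by
  have z0 : zVert n 0 = 0 := rfl
  have z1 : zVert n 1 = n + 0 := zVert_succ n 0
  have z2 : zVert n 2 = n + 1 := zVert_succ n 1
  refine le_antisymm (nu_le fun M hIM => ?_) ?_
  · by_cases hT0 : s(0, n) ∈ M
    · set M' := M.erase s(0, n) with hM'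
      have hIM' : (cyclePathGraph n 3).IsInducedMatching M' :=
        im_subset hIM (Finset.erase_subset _ _)
      have hcyc : ∀ e ∈ M', ∃ i, 2 ≤ i ∧ i < n - 2 ∧ e = s(i, i+1) := by
        intro e he'
        have he := Finset.mem_of_mem_erase he'
        have hnee := Finset.ne_of_mem_erase he'
        rcases edge_cases (hIM.1 e he) with ⟨i, hi, hei⟩ | ⟨k, hk, hek⟩
        · exact tail0_constraint hn (by omega) hIM hT0 he hnee hi hei
        · exfalso
          have hk2 : k < 2 := by omega
          interval_cases k
          · rw [z0, z1, Nat.add_zero] at hek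
            exact hnee hek
          · rw [z1, z2, Nat.add_zero] at hek
            refine hIM.2 _ hT0 e he (fun h => ?_) 0 (by simp) n
              (by rw [hek]; simp) (adj0n (by omega) (by omega))
            rw [hek, Sym2.eq_iff] at h
            omega
      have hpp := path_pack hn hIM' (show n - 2 < n by omega) hcyc
      have hcard : M'.card = M.card - 1 := Finset.card_erase_of_mem hT0
      have hpos : 1 ≤ M.card := Finset.card_pos.mpr ⟨_, hT0⟩
      omega
    · by_cases hT1 : s(n, n+1) ∈ M
      · set M' := M.erase s(n, n+1) with hM'
        have hIM' : (cyclePathGraph n 3).IsInducedMatching M' :=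
          im_subset hIM (Finset.erase_subset _ _)
        have hcyc : ∀ e ∈ M', ∃ i, 1 ≤ i ∧ i < n - 1 ∧ e = s(i, i+1) := by
          intro e he'
          have he := Finset.mem_of_mem_erase he'
          have hnee := Finset.ne_of_mem_erase he'
          rcases edge_cases (hIM.1 e he) with ⟨i, hi, hei⟩ | ⟨k, hk, hek⟩
          · have key := hIM.2 _ hT1 e he (Ne.symm hnee)
            have F : ∀ v ∈ e, v ≠ 0 := by
              intro v hv
              rintro rfl
              exact key n (by simp) 0 hv (adj0n (by omega) (by omega)).symm
            have Hi := F i (sym2_mem_left hei)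
            have Hj := F _ (sym2_mem_right hei)
            obtain ⟨hmod, hlt⟩ := mod_succ_eq (show 1 ≤ n by omega) hi Hj
            exact ⟨i, by omega, by omega, by rw [hei, hmod]⟩
          · exfalso
            have hk2 : k < 2 := by omega
            interval_cases k
            · rw [z0, z1, Nat.add_zero] at hek
              exact hT0 (hek ▸ he)
            · rw [z1, z2, Nat.add_zero] at hek
              exact hnee hek
        have hpp := path_pack hn hIM' (show n - 1 < n by omega) hcyc
        have hcard : M'.card = M.card - 1 := Finset.card_erase_of_mem hT1
        have hpos : 1 ≤ M.card := Finset.card_pos.mpr ⟨_, hT1⟩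
        omega
      · have hle := no_tail_cyc hn hIM (fun e he k hk => by
          have hk2 : k < 2 := by omega
          interval_cases k
          · rw [z0, z1, Nat.add_zero]
            exact fun h => hT0 (h ▸ he)
          · rw [z1, z2, Nat.add_zero]
            exact fun h => hT1 (h ▸ he))
        omega
  · set N := n / 3 with hN
    have hA := famA_im 3 hn 1 N (by omega) (Or.inl (by omega))
    have hrange : ∀ e ∈ famA 1 N, ∀ v ∈ e, 1 ≤ v ∧ v ≤ n - 1 := by
      intro e he v hv
      obtain ⟨t, ht, rfl⟩ := famA_mem he
      rw [Sym2.mem_iff] at hv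
      omega
    have hNA : ∀ v, 1 ≤ v → v ≤ n - 1 →
        ¬ (cyclePathGraph n 3).Adj n v ∧ ¬ (cyclePathGraph n 3).Adj (n+1) v := by
      intro v h1v hvn
      constructor
      · intro hadj
        obtain ⟨k, hk, hc⟩ := adj_big (by omega) le_rfl hadj
        have hk2 : k < 2 := by omega
        interval_cases k <;> simp only [z0, z1, z2] at hc <;> omega
      · intro hadj
        obtain ⟨k, hk, hc⟩ := adj_big (by omega) (by omega) hadj
        have hk2 : k < 2 := by omega
        interval_cases k <;> simp only [z0, z1, z2] at hc <;> omega
    have hnotmem : s(n, n+1) ∉ famA 1 N := by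
      intro h
      obtain ⟨t, ht, h⟩ := famA_mem h
      rw [Sym2.eq_iff] at h
      omega
    have hIMfull : (cyclePathGraph n 3).IsInducedMatching (insert s(n, n+1) (famA 1 N)) := by
      constructor
      · intro e he
        rcases Finset.mem_insert.mp he with rfl | heA
        · exact ((cyclePathGraph n 3).mem_edgeSet).mpr (adjnn1 (by omega) le_rfl)
        · exact hA.1 e heA
      · intro e he f hf hef u hu v hv hadj
        rcases Finset.mem_insert.mp he with rfl | heA <;>
          rcases Finset.mem_insert.mp hf with rfl | hfA
        · exact hef rfl
        · rw [Sym2.mem_iff] at hu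
          have hvr := hrange f hfA v hv
          rcases hu with rfl | rfl
          · exact (hNA v hvr.1 hvr.2).1 hadj
          · exact (hNA v hvr.1 hvr.2).2 hadj
        · rw [Sym2.mem_iff] at hv
          have hur := hrange e heA u hu
          rcases hv with rfl | rfl
          · exact (hNA u hur.1 hur.2).1 hadj.symm
          · exact (hNA u hur.1 hur.2).2 hadj.symm
        · exact hA.2 e heA f hfA hef u hu v hv hadj
    have hle := le_nu (show 1 ≤ n by omega) (show (1:ℕ) ≤ 3 by omega) hIMfull
    rw [Finset.card_insert_of_notMem hnotmem, famA_card] at hle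
    omega

lemma edge_mono {n l l' : ℕ} (h : l ≤ l') {e : Sym2 ℕ}
    (he : e ∈ (cyclePathGraph n l).edgeSet) : e ∈ (cyclePathGraph n l').edgeSet := by
  induction e with
  | _ a b =>
    rw [SimpleGraph.mem_edgeSet] at he ⊢
    exact adj_mono h he

lemma step {n l : ℕ} (hn : 3 ≤ n) (hl : 1 ≤ l) :
    (cyclePathGraph n (l+3)).inducedMatchingNumber
      = (cyclePathGraph n l).inducedMatchingNumber + 1 := by
  have hn1 : (1:ℕ) ≤ n := by omega
  refine le_antisymm ?_ ?_
  · -- upper: every IM of G_{l+3} loses at most one edge when restricted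
    refine nu_le fun M hIM => ?_
    classical
    set M' := M.filter (fun e => ∀ u ∈ e, u < n + l - 1) with hM'
    have hsub : M' ⊆ M := Finset.filter_subset _ _
    have hIM' : (cyclePathGraph n l).IsInducedMatching M' := by
      constructor
      · intro e he
        have heM := hsub he
        have hsmall := (Finset.mem_filter.mp he).2
        have heE := hIM.1 e heM
        induction e with
        | _ a b =>
          rw [SimpleGraph.mem_edgeSet] at heE ⊢
          exact adj_restrict hl (by omega) heE (hsmall a (by simp)) (hsmall b (by simp))
      · intro e he f hf hef u hu v hv hadj
        exact hIM.2 e (hsub he) f (hsub hf) hef u hu v hv (adj_mono (by omega) hadj)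
    have hclass : ∀ e ∈ M \ M', ∃ k, l - 1 ≤ k ∧ k + 1 < l + 3 ∧
        e = s(zVert n k, zVert n (k+1)) := by
      intro e he
      rw [Finset.mem_sdiff] at he
      obtain ⟨heM, heM'⟩ := he
      rw [hM', Finset.mem_filter] at heM'
      push_neg at heM'
      obtain ⟨u, hu, hub⟩ := heM' heM
      rcases edge_cases (hIM.1 e heM) with ⟨i, hi, hei⟩ | ⟨k, hk, hek⟩
      · exfalso
        rw [hei, Sym2.mem_iff] at hu
        have := Nat.mod_lt (i+1) (show 0 < n by omega)
        omega
      · refine ⟨k, ?_, hk, hek⟩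
        rw [hek, Sym2.mem_iff] at hu
        rcases k with _ | k0
        · rw [zVert_zero, zVert_succ] at hu
          omega
        · rw [zVert_succ, zVert_succ] at hu
          omega
    have hpair : ∀ e ∈ M, ∀ f ∈ M, e ≠ f → ∀ ke kf, kf + 1 < l + 3 →
        e = s(zVert n ke, zVert n (ke+1)) → f = s(zVert n kf, zVert n (kf+1)) →
        kf ≠ ke + 1 ∧ kf ≠ ke + 2 := by
      intro e he f hf hef ke kf hkf hee hff
      constructor
      · rintro rfl
        exact hIM.2 e he f hf hef (zVert n ke) (sym2_mem_left hee)
          (zVert n (ke+1)) (sym2_mem_left hff) (adj_tail hn1 (by omega))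
      · rintro rfl
        exact hIM.2 e he f hf hef (zVert n (ke+1)) (sym2_mem_right hee)
          (zVert n (ke+2)) (sym2_mem_left hff) (adj_tail hn1 (by omega))
    have hone : (M \ M').card ≤ 1 := by
      by_contra hc
      push_neg at hc
      obtain ⟨e, he, f, hf, hef⟩ := Finset.one_lt_card.mp hc
      obtain ⟨ke, hke1, hke2, hee⟩ := hclass e he
      obtain ⟨kf, hkf1, hkf2, hff⟩ := hclass f hf
      have heM := (Finset.mem_sdiff.mp he).1
      have hfM := (Finset.mem_sdiff.mp hf).1
      have hne : ke ≠ kf := by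
        rintro rfl
        exact hef (by rw [hee, hff])
      have h1 := hpair e heM f hfM hef ke kf hkf2 hee hff
      have h2 := hpair f hfM e heM (Ne.symm hef) kf ke hke2 hff hee
      omega
    have hcard : (M \ M').card = M.card - M'.card := Finset.card_sdiff_of_subset hsub
    have hc' := Finset.card_le_card hsub
    have := le_nu hn1 hl hIM'
    omega
  · -- lower: extend a maximum IM of G_l by the far tail edge
    obtain ⟨M, hIM, hcard⟩ := nu_mem hn1 hl
    have hbound : ∀ e ∈ M, ∀ u ∈ e, u < n + l - 1 := fun e he u hu =>
      mem_edge_lt hn1 hl (hIM.1 e he) hu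
    have hkey : ∀ u, (u = n + l ∨ u = n + l + 1) → ∀ v, v < n + l - 1 →
        ¬ (cyclePathGraph n (l+3)).Adj u v := by
      intro u hu v hv hadj
      obtain ⟨k, hk, hc⟩ := adj_big hn1 (by omega) hadj
      rcases hc with ⟨h1, h2⟩ | ⟨h1, h2⟩
      · rcases k with _ | k0
        · rw [zVert_zero] at h1; omega
        · rw [zVert_succ] at h1
          rw [zVert_succ] at h2
          omega
      · rcases k with _ | k0
        · rw [zVert_succ] at h2; omega
        · rw [zVert_succ] at h1
          rw [zVert_succ] at h2
          omega
    have hnew : s(n + l, n + l + 1) ∈ (cyclePathGraph n (l+3)).edgeSet := by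
      rw [SimpleGraph.mem_edgeSet]
      have := adj_tail (n := n) hn1 (show (l+1) + 1 < l + 3 by omega)
      rw [zVert_succ, zVert_succ, ← Nat.add_assoc] at this
      exact this
    have hnotmem : s(n + l, n + l + 1) ∉ M := by
      intro h
      have := hbound _ h (n + l) (by simp)
      omega
    have hIM2 : (cyclePathGraph n (l+3)).IsInducedMatching (insert s(n+l, n+l+1) M) := by
      constructor
      · intro e he
        rcases Finset.mem_insert.mp he with rfl | heM
        · exact hnew
        · exact edge_mono (by omega) (hIM.1 e heM)
      · intro e he f hf hef u hu v hv hadj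
        rcases Finset.mem_insert.mp he with rfl | heM <;>
          rcases Finset.mem_insert.mp hf with rfl | hfM
        · exact hef rfl
        · rw [Sym2.mem_iff] at hu
          exact hkey u (by omega) v (hbound f hfM v hv) hadj
        · rw [Sym2.mem_iff] at hv
          exact hkey v (by omega) u (hbound e heM u hu) hadj.symm
        · have hu' := hbound e heM u hu
          have hv' := hbound f hfM v hv
          exact hIM.2 e heM f hfM hef u hu v hv (adj_restrict hl (by omega) hadj hu' hv')
    have hle := le_nu hn1 (show 1 ≤ l + 3 by omega) hIM2
    rw [Finset.card_insert_of_notMem hnotmem, hcard] at hle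
    exact hle

end Aux

/-- For `n ≥ 3` and `l ≥ 1`, `ν(C_n · P_l) = ⌊n/3⌋ + ⌊(l - ξ₃(n) + 1)/3⌋`. -/
theorem inducedMatchingNumber_cyclePathGraph (n l : ℕ) (hn : 3 ≤ n) (hl : 1 ≤ l) :
    (cyclePathGraph n l).inducedMatchingNumber = n / 3 + (l - xi3 n + 1) / 3 := by
  have hxi : xi3 n = 0 ∨ xi3 n = 1 := by unfold xi3; split <;> simp
  revert hl
  induction l using Nat.strong_induction_on with
  | _ l ih =>
    intro hl
    by_cases h4 : l < 4
    · interval_cases l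
      · rw [base1 hn]
        rcases hxi with h | h <;> rw [h] <;> omega
      · rw [base2 hn]
        simp only [xi3]
        split_ifs <;> omega
      · rw [base3 hn]
        rcases hxi with h | h <;> rw [h] <;> omega
    · obtain ⟨l', rfl, hl'⟩ : ∃ l', l = l' + 3 ∧ 1 ≤ l' := ⟨l - 3, by omega, by omega⟩
      rw [step hn hl', ih l' (by omega) hl']
      rcases hxi with h | h <;> rw [h] <;> omega
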